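/- Let Φ = (V, 𝒬, 𝒞) be a CSP formula with variables enumerated v_1, …, v_n, and let p' ∈ (0,1) satisfy p < p'. Let X_0 = ☆^V be the everywhere-unaccessed partial assignment, and let X_1, …, X_n be partial assignments such that for every i ∈ {1,…,n}, either X_i = X_{i−1}, or v_i ∉ Λ⁺(X_{i−1}), X_i = (X_{i−1})_{v_i ← a_i} for some a_i ∈ Q_{v_i}, and ℙ[¬c | X_{i−1}] ≤ p' holds for every constraint c ∈ 𝒞 with v_i ∈ vbl(c). Then ℙ[¬c | X_i] ≤ p'·q for every c ∈ 𝒞 and every 0 ≤ i ≤ n. -/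

import Mathlib

open Finset

inductive PVal (α : Type) : Type where
  | val (a : α)
  | star
  | unacc

structure CSP (V : Type) [Fintype V] [DecidableEq V] where
  Q : V → Type
  fintypeQ : ∀ v, Fintype (Q v)
  decEqQ : ∀ v, DecidableEq (Q v)
  card_two : ∀ v, 2 ≤ Fintype.card (Q v)
  C : Type
  fintypeC : Fintype C
  decEqC : DecidableEq C
  vbl : C → Finset V
  sat : C → ((v : V) → Q v) → Prop
  sat_local : ∀ c x y, (∀ v ∈ vbl c, x v = y v) → sat c x → sat c y

attribute [instance] CSP.fintypeQ CSP.decEqQ CSP.fintypeC CSP.decEqC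

namespace CSP

variable {V : Type} [Fintype V] [DecidableEq V] (Φ : CSP V)

/-- The space of (full) assignments `𝒬 = ∏_v Q_v`. -/
abbrev Assign := (v : V) → Φ.Q v

/-- Partial assignments `𝒬* = ∏_v (Q_v ∪ {⋆, ☆})`. -/
abbrev PAssign := (v : V) → PVal (Φ.Q v)

/-- A full assignment agrees with a partial assignment on all assigned variables. -/
def agrees (σ : Φ.PAssign) (x : Φ.Assign) : Prop :=
  ∀ (v : V) (a : Φ.Q v), σ v = PVal.val a → x v = a

/-- `v ∈ Λ(σ)` : the variable `v` is assigned a value from its domain in `σ`. -/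
def assigned (σ : Φ.PAssign) (v : V) : Prop := ∃ a, σ v = PVal.val a

/-- The set of satisfying assignments. -/
def Sat : Set Φ.Assign := {x | ∀ c, Φ.sat c x}

/-- The event `¬ c` that constraint `c` is violated. -/
def viol (c : Φ.C) : Set Φ.Assign := {x | ¬ Φ.sat c x}

/-- `ℙ[A]` : probability of the event `A` under the uniform product distribution. -/
noncomputable def prob (A : Set Φ.Assign) : ℝ :=
  (A.ncard : ℝ) / (Fintype.card Φ.Assign : ℝ)

/-- `ℙ[A | σ]` : probability of `A` under the uniform product distribution conditioned
on agreeing with `σ` on all assigned variables. -/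
noncomputable def condProb (A : Set Φ.Assign) (σ : Φ.PAssign) : ℝ :=
  ((A ∩ {x | Φ.agrees σ x}).ncard : ℝ) / (({x : Φ.Assign | Φ.agrees σ x}).ncard : ℝ)

/-- `Pr_μ[A]` : probability of `A` under the uniform distribution over satisfying assignments. -/
noncomputable def muProb (A : Set Φ.Assign) : ℝ :=
  ((A ∩ Φ.Sat).ncard : ℝ) / ((Φ.Sat.ncard : ℝ))

/-- the domain size `q`. -/
noncomputable def qmax : ℕ := Finset.univ.sup fun v : V => Fintype.card (Φ.Q v)

/-- the width `k`. -/
noncomputable def width : ℕ := Finset.univ.sup fun c : Φ.C => (Φ.vbl c).card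

/-- the dependency degree `Δ`. -/
noncomputable def degree : ℕ :=
  Finset.univ.sup fun c : Φ.C =>
    (Finset.univ.filter fun c' : Φ.C => c' ≠ c ∧ ((Φ.vbl c) ∩ (Φ.vbl c')).Nonempty).card

end CSP

namespace CSP

variable {V : Type} [Fintype V] [DecidableEq V] {Φ : CSP V}

instance nonemptyQ (v : V) : Nonempty (Φ.Q v) :=
  Fintype.card_pos_iff.mp (by have := Φ.card_two v; omega)

/-- The agreeing set is nonempty. -/
lemma agrees_nonempty (σ : Φ.PAssign) : {x : Φ.Assign | Φ.agrees σ x}.Nonempty := by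
  classical
  refine ⟨fun w => match σ w with
    | PVal.val a => a
    | PVal.star => Classical.arbitrary _
    | PVal.unacc => Classical.arbitrary _, ?_⟩
  intro w a h
  simp only [Set.mem_setOf_eq]
  rw [h]

/-- Fiber counting: if `T` is invariant under changing coordinate `v`, then
`|T| = |Q v| * |T ∩ {x v = a}|`. -/
lemma count_fiber (T : Set Φ.Assign) (v : V)
    (hT : ∀ x (b : Φ.Q v), x ∈ T → Function.update x v b ∈ T) (a : Φ.Q v) :
    T.ncard = Fintype.card (Φ.Q v) * (T ∩ {x | x v = a}).ncard := by
  classical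
  have e : T ≃ Φ.Q v × ↥(T ∩ {x | x v = a}) :=
    { toFun := fun x => (x.1 v, ⟨Function.update x.1 v a, hT _ _ x.2, by simp⟩)
      invFun := fun y => ⟨Function.update y.2.1 v y.1, hT _ _ y.2.2.1⟩
      left_inv := by
        rintro ⟨x, hx⟩
        ext w
        simp [Function.update_idem, Function.update_eq_self]
      right_inv := by
        rintro ⟨b, ⟨y, hy, hyv⟩⟩
        simp only [Set.mem_setOf_eq] at hyv
        subst hyv
        simp [Function.update_idem, Function.update_eq_self] }
  rw [← Nat.card_coe_set_eq, ← Nat.card_coe_set_eq, Nat.card_congr e,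
    Nat.card_prod, Nat.card_eq_fintype_card]

lemma agrees_update (σ : Φ.PAssign) (v : V) (hσ : σ v = PVal.unacc) (a : Φ.Q v) :
    {x : Φ.Assign | Φ.agrees (Function.update σ v (PVal.val a)) x}
      = {x | Φ.agrees σ x} ∩ {x | x v = a} := by
  classical
  ext x
  simp only [Set.mem_setOf_eq, Set.mem_inter_iff, agrees]
  constructor
  · intro h
    refine ⟨fun w b hw => ?_, h v a (by simp)⟩
    rcases eq_or_ne w v with rfl | hne
    · rw [hσ] at hw; cases hw
    · exact h w b (by simpa [Function.update_of_ne hne] using hw)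
  · rintro ⟨h1, h2⟩ w b hw
    rcases eq_or_ne w v with rfl | hne
    · simp only [Function.update_self] at hw
      cases hw; exact h2
    · exact h1 w b (by simpa [Function.update_of_ne hne] using hw)

lemma agrees_invariant (σ : Φ.PAssign) (v : V) (hσ : σ v = PVal.unacc) :
    ∀ x (b : Φ.Q v), x ∈ {x : Φ.Assign | Φ.agrees σ x} →
      Function.update x v b ∈ {x : Φ.Assign | Φ.agrees σ x} := by
  classical
  intro x b hx w c hw
  rcases eq_or_ne w v with rfl | hne
  · rw [hσ] at hw; cases hw
  · rw [Function.update_of_ne hne]; exact hx w c hw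

lemma condProb_nonneg (A : Set Φ.Assign) (σ : Φ.PAssign) : 0 ≤ Φ.condProb A σ := by
  unfold condProb; positivity

/-- Key bound: assigning a value multiplies conditional probability by at most `|Q v|`. -/
lemma condProb_update_le (A : Set Φ.Assign) (σ : Φ.PAssign) (v : V)
    (hσ : σ v = PVal.unacc) (a : Φ.Q v) :
    Φ.condProb A (Function.update σ v (PVal.val a)) ≤
      (Fintype.card (Φ.Q v) : ℝ) * Φ.condProb A σ := by
  classical
  have hS := agrees_update σ v hσ a
  have hden := count_fiber {x : Φ.Assign | Φ.agrees σ x} v (agrees_invariant σ v hσ) a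
  have hq : (0:ℝ) < (Fintype.card (Φ.Q v) : ℝ) := by
    have := Φ.card_two v; positivity
  have hpos : (0:ℝ) < ((({x : Φ.Assign | Φ.agrees σ x} ∩ {x | x v = a})).ncard : ℝ) := by
    have h1 := agrees_nonempty (Φ := Φ) (Function.update σ v (PVal.val a))
    rw [hS] at h1
    exact_mod_cast Set.ncard_pos (Set.toFinite _) |>.mpr h1
  have hnum : ((A ∩ ({x | Φ.agrees σ x} ∩ {x | x v = a})).ncard : ℝ)
      ≤ ((A ∩ {x | Φ.agrees σ x}).ncard : ℝ) := by
    have : A ∩ ({x | Φ.agrees σ x} ∩ {x | x v = a}) ⊆ A ∩ {x | Φ.agrees σ x} :=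
      Set.inter_subset_inter_right A Set.inter_subset_left
    exact_mod_cast Set.ncard_le_ncard this (Set.toFinite _)
  unfold condProb
  rw [hS]
  rw [div_le_iff₀ hpos]
  rw [show (({x : Φ.Assign | Φ.agrees σ x}).ncard : ℝ) =
      (Fintype.card (Φ.Q v) : ℝ) * ((({x : Φ.Assign | Φ.agrees σ x} ∩ {x | x v = a})).ncard : ℝ)
      from by exact_mod_cast hden]
  rw [show (Fintype.card (Φ.Q v) : ℝ) *
      (((A ∩ {x | Φ.agrees σ x}).ncard : ℝ) /
        ((Fintype.card (Φ.Q v) : ℝ) * ((({x : Φ.Assign | Φ.agrees σ x} ∩ {x | x v = a})).ncard : ℝ)))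
      * ((({x : Φ.Assign | Φ.agrees σ x} ∩ {x | x v = a})).ncard : ℝ)
      = ((A ∩ {x | Φ.agrees σ x}).ncard : ℝ) from by
    field_simp]
  exact hnum

/-- If `A` is invariant under coordinate `v`, conditional probability is unchanged. -/
lemma condProb_update_eq (A : Set Φ.Assign) (σ : Φ.PAssign) (v : V)
    (hσ : σ v = PVal.unacc) (a : Φ.Q v)
    (hA : ∀ x (b : Φ.Q v), x ∈ A → Function.update x v b ∈ A) :
    Φ.condProb A (Function.update σ v (PVal.val a)) = Φ.condProb A σ := by
  classical
  have hS := agrees_update σ v hσ a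
  have hSinv := agrees_invariant (Φ := Φ) σ v hσ
  have hAS : ∀ x (b : Φ.Q v), x ∈ A ∩ {x : Φ.Assign | Φ.agrees σ x} →
      Function.update x v b ∈ A ∩ {x : Φ.Assign | Φ.agrees σ x} :=
    fun x b hx => ⟨hA x b hx.1, hSinv x b hx.2⟩
  have hden := count_fiber {x : Φ.Assign | Φ.agrees σ x} v hSinv a
  have hnum := count_fiber (A ∩ {x : Φ.Assign | Φ.agrees σ x}) v hAS a
  unfold condProb
  rw [hS, ← Set.inter_assoc]
  have hq : (0:ℝ) < (Fintype.card (Φ.Q v) : ℝ) := by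
    have := Φ.card_two v; positivity
  rw [show ((A ∩ {x | Φ.agrees σ x}).ncard : ℝ) =
      (Fintype.card (Φ.Q v) : ℝ) * ((A ∩ {x | Φ.agrees σ x} ∩ {x | x v = a}).ncard : ℝ) by
    exact_mod_cast hnum,
    show (({x : Φ.Assign | Φ.agrees σ x}).ncard : ℝ) =
      (Fintype.card (Φ.Q v) : ℝ) * (({x : Φ.Assign | Φ.agrees σ x} ∩ {x | x v = a}).ncard : ℝ) by
    exact_mod_cast hden,
    mul_div_mul_left _ _ (ne_of_gt hq)]

lemma condProb_unacc (A : Set Φ.Assign) :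
    Φ.condProb A (fun _ => PVal.unacc) = Φ.prob A := by
  have : {x : Φ.Assign | Φ.agrees (fun _ => PVal.unacc) x} = Set.univ := by
    ext x; simp [agrees]
  unfold condProb prob
  rw [this]
  simp [Set.ncard_univ, Nat.card_eq_fintype_card]

end CSP

/-- **Invariant of the main sampling loop.**
Starting from the everywhere-unaccessed partial assignment and assigning, step by step,
a value to a variable `v_i` only when all constraints containing `v_i` currently have
conditional violation probability at most `p'`, every constraint keeps conditional
violation probability at most `p'·q` throughout. -/
theorem statement4 {V : Type} [Fintype V] [DecidableEq V] (Φ : CSP V)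
    (p' : ℝ) (hp' : p' ∈ Set.Ioo (0 : ℝ) 1)
    (hp : ∀ c, Φ.prob (Φ.viol c) < p')
    (n : ℕ) (v : Fin n → V) (hv : Function.Bijective v)
    (X : ℕ → Φ.PAssign) (h0 : X 0 = fun _ => PVal.unacc)
    (hstep : ∀ i : Fin n,
      X (i + 1) = X i ∨
      ((X i) (v i) = PVal.unacc ∧
        (∃ a : Φ.Q (v i), X (i + 1) = Function.update (X i) (v i) (PVal.val a)) ∧
        ∀ c, v i ∈ Φ.vbl c → Φ.condProb (Φ.viol c) (X i) ≤ p')) :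
    ∀ c, ∀ i ≤ n, Φ.condProb (Φ.viol c) (X i) ≤ p' * (Φ.qmax : ℝ) := by
  obtain ⟨hp'0, hp'1⟩ := hp'
  have hqv : ∀ w : V, (Fintype.card (Φ.Q w) : ℝ) ≤ (Φ.qmax : ℝ) := fun w => by
    exact_mod_cast Finset.le_sup (f := fun u : V => Fintype.card (Φ.Q u)) (Finset.mem_univ w)
  -- base case bound
  have hbase : ∀ c, Φ.prob (Φ.viol c) ≤ p' * (Φ.qmax : ℝ) := by
    intro c
    rcases Nat.eq_zero_or_pos Φ.qmax with hq0 | hq1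
    · -- V must be empty
      have hVempty : IsEmpty V := by
        by_contra h
        rw [not_isEmpty_iff] at h
        obtain ⟨w⟩ := h
        have h1 : Fintype.card (Φ.Q w) ≤ Φ.qmax :=
          Finset.le_sup (f := fun u : V => Fintype.card (Φ.Q u)) (Finset.mem_univ w)
        have h2 := Φ.card_two w
        omega
      have hcard : Fintype.card Φ.Assign = 1 := by
        rw [Fintype.card_pi]
        simp [Finset.univ_eq_empty]
      have hzero : (Φ.viol c).ncard = 0 := by
        have h1 := (hp c).trans hp'1
        unfold CSP.prob at h1
        rw [hcard] at h1
        norm_num at h1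
        exact h1
      unfold CSP.prob
      rw [hzero, hq0]
      simp
    · have h1 : (1:ℝ) ≤ (Φ.qmax : ℝ) := by exact_mod_cast hq1
      calc Φ.prob (Φ.viol c) ≤ p' := (hp c).le
        _ ≤ p' * (Φ.qmax : ℝ) := le_mul_of_one_le_right hp'0.le h1
  intro c i hi
  induction i with
  | zero =>
    rw [h0, CSP.condProb_unacc]
    exact hbase c
  | succ i ih =>
    have hin : i < n := hi
    rcases hstep ⟨i, hin⟩ with heq | ⟨hun, ⟨a, hXa⟩, hcond⟩
    · have heq' : X (i + 1) = X i := heq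
      rw [heq']
      exact ih hin.le
    · have hXa' : X (i + 1) = Function.update (X i) (v ⟨i, hin⟩) (PVal.val a) := hXa
      rw [hXa']
      by_cases hc : v ⟨i, hin⟩ ∈ Φ.vbl c
      · calc Φ.condProb (Φ.viol c) (Function.update (X i) (v ⟨i, hin⟩) (PVal.val a))
            ≤ (Fintype.card (Φ.Q (v ⟨i, hin⟩)) : ℝ) * Φ.condProb (Φ.viol c) (X i) :=
              CSP.condProb_update_le _ _ _ hun a
          _ ≤ (Φ.qmax : ℝ) * p' := by
              apply mul_le_mul (hqv _) (hcond c hc) (CSP.condProb_nonneg _ _) (by positivity)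
          _ = p' * (Φ.qmax : ℝ) := mul_comm _ _
      · rw [CSP.condProb_update_eq _ _ _ hun a ?_]
        · exact ih hin.le
        · intro x b hx hsat
          exact hx (Φ.sat_local c (Function.update x (v ⟨i, hin⟩) b) x
            (fun w hw => Function.update_of_ne (by rintro rfl; exact hc hw) _ _) hsat)
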